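/- Given m ∈ ℕ with m ≥ 1, ε ∈ (0, 1/2), and p, q > 0, there exists a constant c = c(m, p, q, ε) such that for every measurable function η : ℝ^m → ℝ satisfying |η(x)| ≤ 1 + |x|^q for all x, one has ∫ η(x)² |x|^p e^{-|x|²/4} dx ≤ c·(∫ η(x)² e^{-|x|²/4} dx)^{(2−ε)/2}. -/

import Mathlib

open MeasureTheory Real

noncomputable section

/-- Euclidean space `ℝⁿ`. -/
abbrev En (n : ℕ) := EuclideanSpace ℝ (Fin n)

variable {n : ℕ}

/-- Partial derivative `∂_i u` in the `i`-th coordinate direction. -/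
def pd (i : Fin n) (u : En n → ℝ) (x : En n) : ℝ :=
  fderiv ℝ u x (EuclideanSpace.single i 1)

/-- Euclidean Laplacian `Δu = Σ_i ∂_i∂_i u`. -/
def lap (u : En n → ℝ) (x : En n) : ℝ := ∑ i, pd i (pd i u) x

/-- The drift Laplacian `ℒu = Δu − ⟨x/2, ∇u⟩` for the potential `f(x) = |x|²/4`. -/
def driftLap (u : En n → ℝ) (x : En n) : ℝ :=
  lap u x - ∑ i, (x i / 2) * pd i u x

/-- The drift Laplacian acting componentwise on vector fields. -/
def driftLapV (Y : En n → Fin n → ℝ) (x : En n) (i : Fin n) : ℝ :=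
  driftLap (fun y => Y y i) x

/-- The gradient `∇u` as a vector field. -/
def gradV (u : En n → ℝ) (x : En n) (i : Fin n) : ℝ := pd i u x

/-- The weighted divergence `div_f Y = div Y − ⟨Y, x/2⟩` for `f(x) = |x|²/4`. -/
def divf (Y : En n → Fin n → ℝ) (x : En n) : ℝ :=
  ∑ i, (pd i (fun y => Y y i) x - Y x i * (x i / 2))

/-- `div_f* Y`, the symmetric 2-tensor `(div_f* Y)_{ij} = −(∂_i Y_j + ∂_j Y_i)/2`. -/
def divfStar (Y : En n → Fin n → ℝ) (x : En n) (i j : Fin n) : ℝ :=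
  -(pd i (fun y => Y y j) x + pd j (fun y => Y y i) x) / 2

/-- The weighted divergence of a matrix-valued map:
`(div_f h)_i = Σ_j (∂_j h_{ij} − (x_j/2) h_{ij})`. -/
def divfT (h : En n → Fin n → Fin n → ℝ) (x : En n) (i : Fin n) : ℝ :=
  ∑ j, (pd j (fun y => h y i j) x - (x j / 2) * h x i j)

/-- The operator `𝒫 = div_f ∘ div_f*` on vector fields. -/
def Pop (Y : En n → Fin n → ℝ) : En n → Fin n → ℝ := divfT (divfStar Y)

/-- The Hessian matrix `(Hess u)_{ij} = ∂_i ∂_j u`. -/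
def hess (u : En n → ℝ) (x : En n) (i j : Fin n) : ℝ := pd i (pd j u) x

/-- The Gaussian weight `e^{-f(x)} = e^{-|x|²/4}`. -/
def gw (x : En n) : ℝ := Real.exp (-(‖x‖ ^ 2 / 4))

lemma gw_pos {n : ℕ} (x : En n) : 0 < gw x := Real.exp_pos _

lemma gw_cont {n : ℕ} : Continuous (gw (n := n)) := by
  unfold gw; fun_prop

lemma key_pt (a t : ℝ) (ha : 0 ≤ a) (ht : 0 ≤ t) :
    (1 + t) ^ a * Real.exp (-(t ^ 2 / 4)) ≤ Real.exp (a ^ 2) := by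
  have h1 : (1 + t) ^ a ≤ Real.exp t ^ a :=
    Real.rpow_le_rpow (by linarith) (by linarith [Real.add_one_le_exp t]) ha
  have h2 : Real.exp t ^ a = Real.exp (t * a) := (Real.exp_mul t a).symm
  calc (1 + t) ^ a * Real.exp (-(t ^ 2 / 4))
      ≤ Real.exp (t * a) * Real.exp (-(t ^ 2 / 4)) := by
        rw [← h2]; exact mul_le_mul_of_nonneg_right h1 (Real.exp_nonneg _)
    _ = Real.exp (t * a - t ^ 2 / 4) := by rw [← Real.exp_add]; ring_nf
    _ ≤ Real.exp (a ^ 2) := Real.exp_le_exp.mpr (by nlinarith [sq_nonneg (t / 2 - a)])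

lemma intMain (m : ℕ) (q' e s : ℝ) (hq : 0 ≤ q') (he : 0 ≤ e) (hs : 0 ≤ s) :
    Integrable (fun x : En m => (1 + ‖x‖ ^ q') ^ e * ‖x‖ ^ s * gw x) := by
  set a : ℝ := q' * e + s + (m + 1) with ha_def
  have ha : 0 ≤ a := by positivity
  have hint : Integrable
      (fun x : En m => (2 ^ e * Real.exp (a ^ 2)) * (1 + ‖x‖) ^ (-((m : ℝ) + 1))) := by
    refine (integrable_one_add_norm ?_).const_mul _
    rw [finrank_euclideanSpace_fin]; linarith
  refine hint.mono' ?_ (ae_of_all _ ?_)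
  · exact ((((Real.continuous_rpow_const he).comp
      (continuous_const.add ((Real.continuous_rpow_const hq).comp continuous_norm))).mul
      ((Real.continuous_rpow_const hs).comp continuous_norm)).mul gw_cont).aestronglyMeasurable
  · intro x
    set t := ‖x‖ with htdef
    have ht : 0 ≤ t := norm_nonneg x
    have h1t : (0:ℝ) < 1 + t := by linarith
    have htq : 0 ≤ t ^ q' := Real.rpow_nonneg ht _
    have hnorm : ‖(1 + t ^ q') ^ e * t ^ s * gw x‖ = (1 + t ^ q') ^ e * t ^ s * gw x := by
      apply norm_of_nonneg
      have := (gw_pos x).le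
      positivity
    rw [hnorm]
    have h1 : (1 + t ^ q') ≤ 2 * (1 + t) ^ q' := by
      have e1 : (1:ℝ) ≤ (1 + t) ^ q' := by
        calc (1:ℝ) = 1 ^ q' := (Real.one_rpow q').symm
          _ ≤ (1 + t) ^ q' := Real.rpow_le_rpow zero_le_one (by linarith) hq
      have e2 : t ^ q' ≤ (1 + t) ^ q' := Real.rpow_le_rpow ht (by linarith) hq
      linarith
    have h2 : (1 + t ^ q') ^ e ≤ 2 ^ e * (1 + t) ^ (q' * e) := by
      calc (1 + t ^ q') ^ e ≤ (2 * (1 + t) ^ q') ^ e :=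
            Real.rpow_le_rpow (by positivity) h1 he
        _ = 2 ^ e * ((1 + t) ^ q') ^ e :=
            Real.mul_rpow (by norm_num) (Real.rpow_nonneg h1t.le _)
        _ = 2 ^ e * (1 + t) ^ (q' * e) := by rw [← Real.rpow_mul h1t.le]
    have h3 : t ^ s ≤ (1 + t) ^ s := Real.rpow_le_rpow ht (by linarith) hs
    have key : (1 + t) ^ (q' * e + s) * gw x ≤
        Real.exp (a ^ 2) * (1 + t) ^ (-((m : ℝ) + 1)) := by
      have hsplit : (1 + t) ^ (q' * e + s) =
          (1 + t) ^ a * (1 + t) ^ (-((m : ℝ) + 1)) := by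
        rw [← Real.rpow_add h1t]; congr 1; rw [ha_def]; push_cast; ring
      rw [hsplit]
      have hgw : gw x = Real.exp (-(t ^ 2 / 4)) := rfl
      have := key_pt a t ha ht
      calc (1 + t) ^ a * (1 + t) ^ (-((m : ℝ) + 1)) * gw x
          = ((1 + t) ^ a * Real.exp (-(t ^ 2 / 4))) * (1 + t) ^ (-((m : ℝ) + 1)) := by
            rw [hgw]; ring
        _ ≤ Real.exp (a ^ 2) * (1 + t) ^ (-((m : ℝ) + 1)) :=
            mul_le_mul_of_nonneg_right this (Real.rpow_nonneg h1t.le _)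
    calc (1 + t ^ q') ^ e * t ^ s * gw x
        ≤ (2 ^ e * (1 + t) ^ (q' * e)) * ((1 + t) ^ s) * gw x := by
          have hg := (gw_pos x).le
          apply mul_le_mul_of_nonneg_right _ hg
          exact mul_le_mul h2 h3 (Real.rpow_nonneg ht _) (by positivity)
      _ = 2 ^ e * ((1 + t) ^ (q' * e + s) * gw x) := by
          rw [Real.rpow_add h1t]; ring
      _ ≤ 2 ^ e * (Real.exp (a ^ 2) * (1 + t) ^ (-((m : ℝ) + 1))) := by
          apply mul_le_mul_of_nonneg_left key (by positivity)
      _ = 2 ^ e * Real.exp (a ^ 2) * (1 + t) ^ (-((m : ℝ) + 1)) := by ring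

lemma memLp_aux {X : Type*} [MeasurableSpace X] {μ : Measure X} {f : X → ℝ} {r : ℝ}
    (hr : 0 < r) (hf : AEStronglyMeasurable f μ)
    (h : Integrable (fun x => |f x| ^ r) μ) : MemLp f (ENNReal.ofReal r) μ := by
  have hq0 : ENNReal.ofReal r ≠ 0 := by
    simp [ENNReal.ofReal_eq_zero, not_le, hr]
  have hqt : ENNReal.ofReal r ≠ ⊤ := ENNReal.ofReal_ne_top
  have h1 : MemLp (fun x => ‖f x‖ ^ (ENNReal.ofReal r).toReal)
      (ENNReal.ofReal r / ENNReal.ofReal r) μ := by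
    rw [ENNReal.div_self hq0 hqt, memLp_one_iff_integrable]
    simpa [ENNReal.toReal_ofReal hr.le, Real.norm_eq_abs] using h
  exact (memLp_norm_rpow_iff hf hq0 hqt).mp h1

/-- Interpolation lemma: given `m ≥ 1`, `ε ∈ (0,1/2)` and `p, q > 0`, there is
`c = c(m,p,q,ε)` so that every measurable `η : ℝ^m → ℝ` with `|η(x)| ≤ 1 + |x|^q` satisfies
`∫ η² |x|^p e^{-|x|²/4} ≤ c (∫ η² e^{-|x|²/4})^{(2-ε)/2}`. -/
theorem stmt_19 (m : ℕ) (hm : 1 ≤ m) (ε : ℝ) (hε : ε ∈ Set.Ioo (0 : ℝ) (1/2))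
    (p q : ℝ) (hp : 0 < p) (hq : 0 < q) :
    ∃ c : ℝ, ∀ η : En m → ℝ, Measurable η → (∀ x, |η x| ≤ 1 + ‖x‖ ^ q) →
      ∫ x : En m, (η x) ^ 2 * ‖x‖ ^ p * gw x
        ≤ c * (∫ x : En m, (η x) ^ 2 * gw x) ^ ((2 - ε) / 2) := by
  obtain ⟨hε0, hε2⟩ := hε
  have hε1 : ε < 1 := by linarith
  have h2ε : (0:ℝ) < 2 - ε := by linarith
  set a : ℝ := 2 / (2 - ε) with ha_def
  set b : ℝ := 2 / ε with hb_def
  have hab : a.HolderConjugate b := by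
    rw [Real.holderConjugate_iff]
    constructor
    · rw [ha_def, lt_div_iff₀ h2ε]; linarith
    · rw [ha_def, hb_def, inv_div, inv_div, ← add_div, sub_add_cancel, div_self two_ne_zero]
  have ha_pos : 0 < a := by rw [ha_def]; positivity
  have hb_pos : 0 < b := by rw [hb_def]; positivity
  refine ⟨(∫ x : En m, ((1 + ‖x‖ ^ q) ^ ε * ‖x‖ ^ p * gw x ^ (ε / 2)) ^ b) ^ (1/b), ?_⟩
  intro η hη hbd
  set G : En m → ℝ := fun x => (1 + ‖x‖ ^ q) ^ ε * ‖x‖ ^ p * gw x ^ (ε / 2) with hG_def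
  set F : En m → ℝ := fun x => |η x| ^ (2 - ε) * gw x ^ ((2 - ε) / 2) with hF_def
  have hGnn : ∀ x, 0 ≤ G x := fun x => by
    rw [hG_def]
    have h1 : (0:ℝ) ≤ ‖x‖ ^ q := Real.rpow_nonneg (norm_nonneg _) _
    have h2 := (gw_pos x).le
    positivity
  have hFnn : ∀ x, 0 ≤ F x := fun x => by
    rw [hF_def]
    exact mul_nonneg (Real.rpow_nonneg (abs_nonneg _) _)
      (Real.rpow_nonneg (gw_pos x).le _)
  -- measurability
  have hGmeas : Continuous G := by
    rw [hG_def]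
    exact (((Real.continuous_rpow_const hε0.le).comp
        (continuous_const.add ((Real.continuous_rpow_const hq.le).comp continuous_norm))).mul
        ((Real.continuous_rpow_const hp.le).comp continuous_norm)).mul
        ((Real.continuous_rpow_const (by positivity)).comp gw_cont)
  have hFmeas : Measurable F := by
    rw [hF_def]
    exact ((Real.continuous_rpow_const h2ε.le).measurable.comp hη.abs).mul
      (((Real.continuous_rpow_const (by positivity)).comp gw_cont).measurable)
  -- key pointwise identities
  have hFa : ∀ x, F x ^ a = η x ^ 2 * gw x := by
    intro x
    have e1 : (2 - ε) * a = 2 := by rw [ha_def]; field_simp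
    have e2 : (2 - ε) / 2 * a = 1 := by rw [ha_def]; field_simp
    rw [hF_def]
    calc (|η x| ^ (2 - ε) * gw x ^ ((2 - ε) / 2)) ^ a
        = (|η x| ^ (2 - ε)) ^ a * (gw x ^ ((2 - ε) / 2)) ^ a :=
          Real.mul_rpow (Real.rpow_nonneg (abs_nonneg _) _) (Real.rpow_nonneg (gw_pos x).le _)
      _ = |η x| ^ ((2 - ε) * a) * gw x ^ ((2 - ε) / 2 * a) := by
          rw [← Real.rpow_mul (abs_nonneg _), ← Real.rpow_mul (gw_pos x).le]
      _ = η x ^ 2 * gw x := by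
          rw [e1, e2, Real.rpow_one,
            show (2:ℝ) = ((2:ℕ):ℝ) by norm_num, Real.rpow_natCast, sq_abs]
  have hGb : ∀ x, G x ^ b = (1 + ‖x‖ ^ q) ^ (ε * b) * ‖x‖ ^ (p * b) * gw x := by
    intro x
    have e2 : ε / 2 * b = 1 := by rw [hb_def]; field_simp
    have h1 : (0:ℝ) ≤ 1 + ‖x‖ ^ q := by
      have := Real.rpow_nonneg (norm_nonneg x) q; linarith
    rw [hG_def]
    calc ((1 + ‖x‖ ^ q) ^ ε * ‖x‖ ^ p * gw x ^ (ε / 2)) ^ b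
        = ((1 + ‖x‖ ^ q) ^ ε) ^ b * (‖x‖ ^ p) ^ b * (gw x ^ (ε / 2)) ^ b := by
          rw [Real.mul_rpow (mul_nonneg (Real.rpow_nonneg h1 _) (Real.rpow_nonneg (norm_nonneg _) _))
            (Real.rpow_nonneg (gw_pos x).le _),
            Real.mul_rpow (Real.rpow_nonneg h1 _) (Real.rpow_nonneg (norm_nonneg _) _)]
      _ = (1 + ‖x‖ ^ q) ^ (ε * b) * ‖x‖ ^ (p * b) * gw x := by
          rw [← Real.rpow_mul h1, ← Real.rpow_mul (norm_nonneg _),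
            ← Real.rpow_mul (gw_pos x).le, e2, Real.rpow_one]
  -- integrability facts
  have I1 : Integrable (fun x : En m => G x ^ b) := by
    have : (fun x : En m => G x ^ b)
        = fun x => (1 + ‖x‖ ^ q) ^ (ε * b) * ‖x‖ ^ (p * b) * gw x := funext hGb
    rw [this]
    exact intMain m q (ε * b) (p * b) hq.le (by positivity) (by positivity)
  have I2 : Integrable (fun x : En m => η x ^ 2 * gw x) := by
    refine (intMain m q 2 0 hq.le (by norm_num) le_rfl).mono'
      ((hη.pow_const 2).mul gw_cont.measurable).aestronglyMeasurable (ae_of_all _ ?_)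
    intro x
    have hg := (gw_pos x).le
    have h1 : (0:ℝ) ≤ ‖x‖ ^ q := Real.rpow_nonneg (norm_nonneg _) _
    have hb2 : η x ^ 2 ≤ (1 + ‖x‖ ^ q) ^ 2 := by
      rw [← sq_abs]
      exact pow_le_pow_left₀ (abs_nonneg _) (hbd x) 2
    have hnorm : ‖η x ^ 2 * gw x‖ = η x ^ 2 * gw x := norm_of_nonneg (by positivity)
    rw [hnorm]
    have : (1 + ‖x‖ ^ q) ^ ((2:ℝ)) * ‖x‖ ^ ((0:ℝ)) * gw x = (1 + ‖x‖ ^ q) ^ 2 * gw x := by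
      rw [Real.rpow_zero, show ((2:ℝ)) = ((2:ℕ):ℝ) by norm_num, Real.rpow_natCast, mul_one]
    rw [this]
    exact mul_le_mul_of_nonneg_right hb2 hg
  have hFG : ∀ x, η x ^ 2 * ‖x‖ ^ p * gw x ≤ F x * G x := by
    intro x
    have h1 : η x ^ 2 = |η x| ^ ((2:ℝ) - ε) * |η x| ^ ε := by
      have hsum : ((2:ℝ) - ε) + ε = 2 := by ring
      calc η x ^ 2 = |η x| ^ ((2:ℝ)) := by
            rw [show (2:ℝ) = ((2:ℕ):ℝ) by norm_num, Real.rpow_natCast, sq_abs]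
        _ = |η x| ^ (((2:ℝ) - ε) + ε) := by rw [hsum]
        _ = |η x| ^ ((2:ℝ) - ε) * |η x| ^ ε :=
            Real.rpow_add' (abs_nonneg _) (by rw [hsum]; norm_num)
    have h2 : |η x| ^ ε ≤ (1 + ‖x‖ ^ q) ^ ε :=
      Real.rpow_le_rpow (abs_nonneg _) (hbd x) hε0.le
    have h3 : gw x = gw x ^ (((2:ℝ) - ε) / 2) * gw x ^ (ε / 2) := by
      have hsum : ((2:ℝ) - ε) / 2 + ε / 2 = 1 := by ring
      rw [← Real.rpow_add (gw_pos x), hsum, Real.rpow_one]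
    rw [hF_def, hG_def]
    calc η x ^ 2 * ‖x‖ ^ p * gw x
        = (|η x| ^ ((2:ℝ) - ε) * gw x ^ (((2:ℝ) - ε) / 2)) *
          (|η x| ^ ε * ‖x‖ ^ p * gw x ^ (ε / 2)) := by
          rw [h1]; nth_rewrite 1 [h3]; ring
      _ ≤ (|η x| ^ ((2:ℝ) - ε) * gw x ^ (((2:ℝ) - ε) / 2)) *
          ((1 + ‖x‖ ^ q) ^ ε * ‖x‖ ^ p * gw x ^ (ε / 2)) := by
          apply mul_le_mul_of_nonneg_left _
            (mul_nonneg (Real.rpow_nonneg (abs_nonneg _) _) (Real.rpow_nonneg (gw_pos x).le _))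
          apply mul_le_mul_of_nonneg_right _ (Real.rpow_nonneg (gw_pos x).le _)
          exact mul_le_mul_of_nonneg_right h2 (Real.rpow_nonneg (norm_nonneg _) _)
  have I3 : Integrable (fun x : En m => F x * G x) := by
    refine (intMain m q 2 p hq.le (by norm_num) hp.le).mono'
      (hFmeas.mul hGmeas.measurable).aestronglyMeasurable (ae_of_all _ ?_)
    intro x
    have hnorm : ‖F x * G x‖ = F x * G x :=
      norm_of_nonneg (mul_nonneg (hFnn x) (hGnn x))
    rw [hnorm]
    have h1 : (0:ℝ) ≤ 1 + ‖x‖ ^ q := by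
      have := Real.rpow_nonneg (norm_nonneg x) q; linarith
    have hF_le : F x ≤ (1 + ‖x‖ ^ q) ^ ((2:ℝ) - ε) * gw x ^ (((2:ℝ) - ε) / 2) := by
      rw [hF_def]
      exact mul_le_mul_of_nonneg_right
        (Real.rpow_le_rpow (abs_nonneg _) (hbd x) h2ε.le)
        (Real.rpow_nonneg (gw_pos x).le _)
    calc F x * G x ≤ ((1 + ‖x‖ ^ q) ^ ((2:ℝ) - ε) * gw x ^ (((2:ℝ) - ε) / 2)) * G x :=
          mul_le_mul_of_nonneg_right hF_le (hGnn x)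
      _ = (1 + ‖x‖ ^ q) ^ ((2:ℝ)) * ‖x‖ ^ p * gw x := by
          rw [hG_def]
          have hgw : gw x ^ (((2:ℝ) - ε) / 2) * gw x ^ (ε / 2) = gw x := by
            rw [← Real.rpow_add (gw_pos x), show ((2:ℝ) - ε) / 2 + ε / 2 = 1 by ring,
              Real.rpow_one]
          have hpq2 : (1 + ‖x‖ ^ q) ^ ((2:ℝ) - ε) * (1 + ‖x‖ ^ q) ^ ε
              = (1 + ‖x‖ ^ q) ^ ((2:ℝ)) := by
            rw [← Real.rpow_add' h1 (by norm_num), sub_add_cancel]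
          calc ((1 + ‖x‖ ^ q) ^ ((2:ℝ) - ε) * gw x ^ (((2:ℝ) - ε) / 2)) *
              ((1 + ‖x‖ ^ q) ^ ε * ‖x‖ ^ p * gw x ^ (ε / 2))
              = ((1 + ‖x‖ ^ q) ^ ((2:ℝ) - ε) * (1 + ‖x‖ ^ q) ^ ε) * ‖x‖ ^ p *
                (gw x ^ (((2:ℝ) - ε) / 2) * gw x ^ (ε / 2)) := by ring
            _ = (1 + ‖x‖ ^ q) ^ ((2:ℝ)) * ‖x‖ ^ p * gw x := by rw [hgw, hpq2]
  -- Memℒp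
  have hF_mem : MemLp F (ENNReal.ofReal a) (volume : Measure (En m)) := by
    refine memLp_aux ha_pos hFmeas.aestronglyMeasurable ?_
    have : (fun x : En m => |F x| ^ a) = fun x => η x ^ 2 * gw x := by
      funext x; rw [abs_of_nonneg (hFnn x), hFa x]
    rw [this]; exact I2
  have hG_mem : MemLp G (ENNReal.ofReal b) (volume : Measure (En m)) := by
    refine memLp_aux hb_pos hGmeas.aestronglyMeasurable ?_
    have : (fun x : En m => |G x| ^ b) = fun x => G x ^ b := by
      funext x; rw [abs_of_nonneg (hGnn x)]
    rw [this]; exact I1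
  have holder := integral_mul_le_Lp_mul_Lq_of_nonneg hab
    (ae_of_all _ hFnn) (ae_of_all _ hGnn) hF_mem hG_mem
  have hIF : ∫ x : En m, F x ^ a = ∫ x : En m, η x ^ 2 * gw x :=
    integral_congr_ae (ae_of_all _ hFa)
  have h1a : 1 / a = (2 - ε) / 2 := by rw [ha_def, one_div_div]
  calc ∫ x : En m, η x ^ 2 * ‖x‖ ^ p * gw x
      ≤ ∫ x : En m, F x * G x := by
        refine integral_mono_of_nonneg (ae_of_all _ ?_) I3 (ae_of_all _ hFG)
        intro x
        have hg := (gw_pos x).le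
        have h1 : (0:ℝ) ≤ ‖x‖ ^ p := Real.rpow_nonneg (norm_nonneg _) _
        positivity
    _ ≤ (∫ x : En m, F x ^ a) ^ (1 / a) * (∫ x : En m, G x ^ b) ^ (1 / b) := holder
    _ = (∫ x : En m, G x ^ b) ^ (1 / b) *
        (∫ x : En m, η x ^ 2 * gw x) ^ ((2 - ε) / 2) := by
        rw [hIF, h1a, mul_comm]
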